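/- If the Hilbert system GL proves Γ^♯ for a sequent Γ, then Γ is derivable in the sequent calculus GL_Seq. -/

import Mathlib

/-- Modal formulas in negation normal form. -/
inductive Fml : Type where
  | pos : ℕ → Fml
  | neg : ℕ → Fml
  | top : Fml
  | bot : Fml
  | and : Fml → Fml → Fml
  | or : Fml → Fml → Fml
  | box : Fml → Fml
  | dia : Fml → Fml
  deriving DecidableEq

/-- De Morgan negation. -/
def Fml.negation : Fml → Fml
  | .pos n => .neg n
  | .neg n => .pos n
  | .top => .bot
  | .bot => .top
  | .and A B => .or A.negation B.negation
  | .or A B => .and A.negation B.negation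
  | .box A => .dia A.negation
  | .dia A => .box A.negation

def Fml.imp (A B : Fml) : Fml := .or A.negation B
def Fml.biimp (A B : Fml) : Fml := .and (A.imp B) (B.imp A)
def Fml.boxdot (A : Fml) : Fml := .and A (.box A)

/-- Boolean evaluation, with modal subformulas evaluated via `m` (diamonds dually). -/
def Fml.eval (v : ℕ → Bool) (m : Fml → Bool) : Fml → Bool
  | .pos n => v n
  | .neg n => !(v n)
  | .top => true
  | .bot => false
  | .and A B => A.eval v m && B.eval v m
  | .or A B => A.eval v m || B.eval v m
  | .box A => m A
  | .dia A => !(m A.negation)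

/-- Boolean tautologies. -/
def Fml.Taut (A : Fml) : Prop := ∀ v m, A.eval v m = true

/-- The Hilbert system for Gödel–Löb logic GLH. -/
inductive GLH : Fml → Prop where
  | taut (A) : A.Taut → GLH A
  | distr (A B) : GLH ((Fml.box (A.imp B)).imp ((Fml.box A).imp (Fml.box B)))
  | lob (A) : GLH ((Fml.box ((Fml.box A).imp A)).imp (Fml.box A))
  | mp (A B) : GLH (A.imp B) → GLH A → GLH B
  | nec (A) : GLH A → GLH (Fml.box A)

/-- One-sided sequents: finite multisets of formulas. -/
abbrev Sequent := Multiset Fml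

/-- Prefix every formula of a sequent with ◇. -/
def diaS (Γ : Sequent) : Sequent := Γ.map Fml.dia

def listSharp : List Fml → Fml
  | [] => .bot
  | [A] => A
  | A :: l => .or A (listSharp l)

/-- Γ^♯ : the disjunction of the formulas of Γ (⊥ if Γ is empty). -/
noncomputable def sharp (Γ : Sequent) : Fml := listSharp Γ.toList

def listConj : List Fml → Fml
  | [] => .top
  | [A] => A
  | A :: l => .and A (listConj l)

/-- The sequent calculus GL_Seq. -/
inductive GLSeq : Sequent → Prop where
  | axA (Γ A) : GLSeq (A ::ₘ A.negation ::ₘ Γ)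
  | axTop (Γ) : GLSeq (Fml.top ::ₘ Γ)
  | andR {Γ A B} : GLSeq (A ::ₘ Γ) → GLSeq (B ::ₘ Γ) → GLSeq (Fml.and A B ::ₘ Γ)
  | orR {Γ A B} : GLSeq (A ::ₘ B ::ₘ Γ) → GLSeq (Fml.or A B ::ₘ Γ)
  | boxGL {Γ Δ A} : GLSeq (A ::ₘ Fml.dia A.negation ::ₘ (Γ + diaS Γ)) →
      GLSeq (Fml.box A ::ₘ (diaS Γ + Δ))

/-- One backward step of the K4-style rules: Γ is an initial sequent or the conclusion of
a rule all of whose premises lie in `S`. -/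
def InfStep (S : Set Sequent) (Γ : Sequent) : Prop :=
  (∃ Δ A, Γ = A ::ₘ Fml.negation A ::ₘ Δ) ∨
  (∃ Δ, Γ = Fml.top ::ₘ Δ) ∨
  (∃ Δ A B, Γ = Fml.and A B ::ₘ Δ ∧ (A ::ₘ Δ) ∈ S ∧ (B ::ₘ Δ) ∈ S) ∨
  (∃ Δ A B, Γ = Fml.or A B ::ₘ Δ ∧ (A ::ₘ B ::ₘ Δ) ∈ S) ∨
  (∃ Δ Θ A, Γ = Fml.box A ::ₘ (diaS Δ + Θ) ∧ (A ::ₘ (Δ + diaS Δ)) ∈ S)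

/-- GL_∞ : Γ has a (possibly non-well-founded) proof in the K4-style system, coinductively:
Γ belongs to some set of sequents each of which is an initial sequent or the conclusion
of a rule with premises in the set. -/
def GLInf (Γ : Sequent) : Prop := ∃ S : Set Sequent, Γ ∈ S ∧ ∀ Δ ∈ S, InfStep S Δ

/-- Circular derivability relative to a history of ancestor sequents available for back-links. -/
inductive GLCircAux : List Sequent → Sequent → Prop where
  | axA (H Γ A) : GLCircAux H (A ::ₘ A.negation ::ₘ Γ)
  | axTop (H Γ) : GLCircAux H (Fml.top ::ₘ Γ)
  | back {H Γ} : Γ ∈ H → GLCircAux H Γ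
  | andR {H Γ A B} : GLCircAux ((Fml.and A B ::ₘ Γ) :: H) (A ::ₘ Γ) →
      GLCircAux ((Fml.and A B ::ₘ Γ) :: H) (B ::ₘ Γ) → GLCircAux H (Fml.and A B ::ₘ Γ)
  | orR {H Γ A B} : GLCircAux ((Fml.or A B ::ₘ Γ) :: H) (A ::ₘ B ::ₘ Γ) →
      GLCircAux H (Fml.or A B ::ₘ Γ)
  | boxR {H Γ Δ A} : GLCircAux ((Fml.box A ::ₘ (diaS Γ + Δ)) :: H) (A ::ₘ (Γ + diaS Γ)) →
      GLCircAux H (Fml.box A ::ₘ (diaS Γ + Δ))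

/-- GL_circ : circular proofs. -/
def GLCirc (Γ : Sequent) : Prop := GLCircAux [] Γ

/-- Circular derivations with assumption leaves. `CircDer H b hs bhs Γ` : a circular
derivation of Γ, with ancestor history `H`, `b` true iff a □-rule occurs on the path from
the root, non-boxed assumption leaves `hs` and boxed assumption leaves `bhs`. -/
inductive CircDer : List Sequent → Bool → List Sequent → List Sequent → Sequent → Prop where
  | axA (H b Γ A) : CircDer H b [] [] (A ::ₘ A.negation ::ₘ Γ)
  | axTop (H b Γ) : CircDer H b [] [] (Fml.top ::ₘ Γ)
  | back {H Γ} (b) : Γ ∈ H → CircDer H b [] [] Γ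
  | hypU (H Γ) : CircDer H false [Γ] [] Γ
  | hypB (H Γ) : CircDer H true [] [Γ] Γ
  | andR {H b Γ A B hs₁ bhs₁ hs₂ bhs₂} :
      CircDer ((Fml.and A B ::ₘ Γ) :: H) b hs₁ bhs₁ (A ::ₘ Γ) →
      CircDer ((Fml.and A B ::ₘ Γ) :: H) b hs₂ bhs₂ (B ::ₘ Γ) →
      CircDer H b (hs₁ ++ hs₂) (bhs₁ ++ bhs₂) (Fml.and A B ::ₘ Γ)
  | orR {H b Γ A B hs bhs} :
      CircDer ((Fml.or A B ::ₘ Γ) :: H) b hs bhs (A ::ₘ B ::ₘ Γ) →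
      CircDer H b hs bhs (Fml.or A B ::ₘ Γ)
  | boxR {H b Γ Δ A hs bhs} :
      CircDer ((Fml.box A ::ₘ (diaS Γ + Δ)) :: H) true hs bhs (A ::ₘ (Γ + diaS Γ)) →
      CircDer H b hs bhs (Fml.box A ::ₘ (diaS Γ + Δ))

/-- Propositional atoms occurring in a formula. -/
def Fml.atoms : Fml → Finset ℕ
  | .pos n => {n}
  | .neg n => {n}
  | .top => ∅
  | .bot => ∅
  | .and A B => A.atoms ∪ B.atoms
  | .or A B => A.atoms ∪ B.atoms
  | .box A => A.atoms
  | .dia A => A.atoms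

/-- All literals occurring in a formula (a literal is an atom with a polarity). -/
def Fml.lits : Fml → Finset (ℕ × Bool)
  | .pos n => {(n, true)}
  | .neg n => {(n, false)}
  | .top => ∅
  | .bot => ∅
  | .and A B => A.lits ∪ B.lits
  | .or A B => A.lits ∪ B.lits
  | .box A => A.lits
  | .dia A => A.lits

/-- u(A) : literals occurring outside the scope of all modal operators. -/
def Fml.uvoc : Fml → Finset (ℕ × Bool)
  | .pos n => {(n, true)}
  | .neg n => {(n, false)}
  | .top => ∅
  | .bot => ∅
  | .and A B => A.uvoc ∪ B.uvoc
  | .or A B => A.uvoc ∪ B.uvoc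
  | .box _ => ∅
  | .dia _ => ∅

/-- v(A) : literals occurring within the scope of a modal operator (to be marked). -/
def Fml.vvoc : Fml → Finset (ℕ × Bool)
  | .and A B => A.vvoc ∪ B.vvoc
  | .or A B => A.vvoc ∪ B.vvoc
  | .box A => A.lits
  | .dia A => A.lits
  | _ => ∅

/-- w(A) = u(A) ∪ v(A)°, where the second Boolean component marks literals. -/
def Fml.wvoc (A : Fml) : Finset ((ℕ × Bool) × Bool) :=
  A.uvoc.image (fun L => (L, false)) ∪ A.vvoc.image (fun L => (L, true))

/-- w*(A) = w(A) ∪ w(A)°. -/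
def Fml.wstar (A : Fml) : Finset ((ℕ × Bool) × Bool) :=
  A.wvoc ∪ A.wvoc.image (fun p => (p.1, true))

/-! ### Auxiliary development for completeness -/

namespace GLCompletenessAux

attribute [local instance] Classical.propDecidable

theorem neg_neg' (A : Fml) : A.negation.negation = A := by
  induction A <;> simp_all [Fml.negation]

theorem neg_ne (A : Fml) : A.negation ≠ A := by
  cases A <;> simp [Fml.negation]

/-! #### size -/

def fsize : Fml → ℕ
  | .and A B => fsize A + fsize B + 1
  | .or A B => fsize A + fsize B + 1
  | .box A => fsize A + 1
  | .dia A => fsize A + 1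
  | _ => 1

theorem fsize_pos (A : Fml) : 0 < fsize A := by
  cases A <;> simp [fsize]

theorem fsize_negation (A : Fml) : fsize A.negation = fsize A := by
  induction A <;> simp_all [Fml.negation, fsize]

def msize (Γ : Sequent) : ℕ := (Γ.map fsize).sum

@[simp] theorem msize_zero : msize 0 = 0 := rfl

@[simp] theorem msize_cons (A : Fml) (Γ : Sequent) :
    msize (A ::ₘ Γ) = fsize A + msize Γ := by
  simp [msize]

@[simp] theorem msize_add (Γ Δ : Sequent) : msize (Γ + Δ) = msize Γ + msize Δ := by
  simp [msize]

theorem msize_pos_of_mem {A : Fml} {Γ : Sequent} (h : A ∈ Γ) : 0 < msize Γ := by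
  rw [← Multiset.cons_erase h, msize_cons]
  have := fsize_pos A; omega

theorem msize_diaS (S : Sequent) :
    msize (diaS S) = Multiset.card S + msize S := by
  induction S using Multiset.induction_on with
  | empty => simp [diaS]
  | cons a S ih => simp [diaS, fsize] at *; omega

/-! #### diamond decomposition of a sequent -/

def Fml.isDia : Fml → Bool
  | .dia _ => true
  | _ => false

def undia : Fml → Option Fml
  | .dia B => some B
  | _ => none

theorem undia_eq_some {a B : Fml} : undia a = some B ↔ a = .dia B := by
  cases a <;> simp [undia]

theorem undia_eq_none {a : Fml} (h : Fml.isDia a = false) : undia a = none := by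
  cases a <;> simp_all [undia, Fml.isDia]

def diasOf (S : Sequent) : Sequent := S.filterMap undia

def nondias (S : Sequent) : Sequent := S.filter (fun C => Fml.isDia C = false)

theorem mem_diasOf {B : Fml} {S : Sequent} : B ∈ diasOf S ↔ Fml.dia B ∈ S := by
  simp only [diasOf, Multiset.mem_filterMap]
  constructor
  · rintro ⟨a, ha, hu⟩; rw [undia_eq_some] at hu; rwa [hu] at ha
  · intro h; exact ⟨_, h, undia_eq_some.2 rfl⟩

theorem decomp (S : Sequent) : diaS (diasOf S) + nondias S = S := by
  induction S using Multiset.induction_on with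
  | empty => simp [diasOf, nondias, diaS]
  | cons a S ih =>
    by_cases hd : Fml.isDia a = true
    · obtain ⟨B, rfl⟩ : ∃ B, a = Fml.dia B := by
        cases a <;> simp_all [Fml.isDia]
      have h1 : diasOf (Fml.dia B ::ₘ S) = B ::ₘ diasOf S := by
        simp only [diasOf]
        exact Multiset.filterMap_cons_some undia _ S (undia_eq_some.2 rfl)
      have h2 : nondias (Fml.dia B ::ₘ S) = nondias S := by
        exact Multiset.filter_cons_of_neg _ (by simp [Fml.isDia])
      rw [h1, h2, diaS, Multiset.map_cons, Multiset.cons_add]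
      rw [diaS] at ih; rw [ih]
    · rw [Bool.not_eq_true] at hd
      have h1 : diasOf (a ::ₘ S) = diasOf S := by
        simp only [diasOf]
        exact Multiset.filterMap_cons_none _ S (undia_eq_none hd)
      have h2 : nondias (a ::ₘ S) = a ::ₘ nondias S := by
        simp [nondias, Multiset.filter_cons, hd]
      rw [h1, h2, Multiset.add_cons, ih]

/-! #### subformula closure -/

def subf : Fml → Finset Fml
  | .and A B => insert (.and A B) (subf A ∪ subf B)
  | .or A B => insert (.or A B) (subf A ∪ subf B)
  | .box A => insert (.box A) (subf A)
  | .dia A => insert (.dia A) (subf A)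
  | A => {A}

theorem mem_subf_self (A : Fml) : A ∈ subf A := by
  cases A <;> simp [subf]

theorem subf_trans : ∀ {A B : Fml}, B ∈ subf A → subf B ⊆ subf A := by
  intro A
  induction A with
  | and A1 A2 ih1 ih2 =>
    intro B hB
    simp only [subf, Finset.mem_insert, Finset.mem_union] at hB
    rcases hB with rfl | h | h
    · exact subset_rfl
    · exact (ih1 h).trans (by intro x hx; simp [subf]; right; left; exact hx)
    · exact (ih2 h).trans (by intro x hx; simp [subf]; right; right; exact hx)
  | or A1 A2 ih1 ih2 =>
    intro B hB
    simp only [subf, Finset.mem_insert, Finset.mem_union] at hB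
    rcases hB with rfl | h | h
    · exact subset_rfl
    · exact (ih1 h).trans (by intro x hx; simp [subf]; right; left; exact hx)
    · exact (ih2 h).trans (by intro x hx; simp [subf]; right; right; exact hx)
  | box A1 ih =>
    intro B hB
    simp only [subf, Finset.mem_insert] at hB
    rcases hB with rfl | h
    · exact subset_rfl
    · exact (ih h).trans (by intro x hx; simp [subf]; right; exact hx)
  | dia A1 ih =>
    intro B hB
    simp only [subf, Finset.mem_insert] at hB
    rcases hB with rfl | h
    · exact subset_rfl
    · exact (ih h).trans (by intro x hx; simp [subf]; right; exact hx)
  | pos n => intro B hB; simp [subf] at hB; subst hB; exact subset_rfl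
  | neg n => intro B hB; simp [subf] at hB; subst hB; exact subset_rfl
  | top => intro B hB; simp [subf] at hB; subst hB; exact subset_rfl
  | bot => intro B hB; simp [subf] at hB; subst hB; exact subset_rfl

theorem subf_negation : ∀ {A B : Fml}, B ∈ subf A → B.negation ∈ subf A.negation := by
  intro A
  induction A with
  | and A1 A2 ih1 ih2 =>
    intro B hB
    simp only [subf, Finset.mem_insert, Finset.mem_union] at hB
    rcases hB with rfl | h | h
    · exact mem_subf_self _
    · simp only [Fml.negation, subf, Finset.mem_insert, Finset.mem_union]
      right; left; exact ih1 h
    · simp only [Fml.negation, subf, Finset.mem_insert, Finset.mem_union]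
      right; right; exact ih2 h
  | or A1 A2 ih1 ih2 =>
    intro B hB
    simp only [subf, Finset.mem_insert, Finset.mem_union] at hB
    rcases hB with rfl | h | h
    · exact mem_subf_self _
    · simp only [Fml.negation, subf, Finset.mem_insert, Finset.mem_union]
      right; left; exact ih1 h
    · simp only [Fml.negation, subf, Finset.mem_insert, Finset.mem_union]
      right; right; exact ih2 h
  | box A1 ih =>
    intro B hB
    simp only [subf, Finset.mem_insert] at hB
    rcases hB with rfl | h
    · exact mem_subf_self _
    · simp only [Fml.negation, subf, Finset.mem_insert]
      right; exact ih h
  | dia A1 ih =>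
    intro B hB
    simp only [subf, Finset.mem_insert] at hB
    rcases hB with rfl | h
    · exact mem_subf_self _
    · simp only [Fml.negation, subf, Finset.mem_insert]
      right; exact ih h
  | pos n => intro B hB; simp [subf] at hB; subst hB; exact mem_subf_self _
  | neg n => intro B hB; simp [subf] at hB; subst hB; exact mem_subf_self _
  | top => intro B hB; simp [subf] at hB; subst hB; exact mem_subf_self _
  | bot => intro B hB; simp [subf] at hB; subst hB; exact mem_subf_self _

/-! #### Kripke semantics -/

structure KM : Type 1 where
  W : Type
  R : W → W → Prop
  V : W → ℕ → Prop
  trans : ∀ {a b c}, R a b → R b c → R a c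
  wf : WellFounded (fun a b => R b a)

def Sat (M : KM) : M.W → Fml → Prop
  | w, .pos n => M.V w n
  | w, .neg n => ¬ M.V w n
  | _, .top => True
  | _, .bot => False
  | w, .and A B => Sat M w A ∧ Sat M w B
  | w, .or A B => Sat M w A ∨ Sat M w B
  | w, .box A => ∀ v, M.R w v → Sat M v A
  | w, .dia A => ∃ v, M.R w v ∧ Sat M v A

theorem Sat_negation (M : KM) (A : Fml) : ∀ w, Sat M w A.negation ↔ ¬ Sat M w A := by
  induction A with
  | pos n => intro w; simp [Fml.negation, Sat]
  | neg n => intro w; simp [Fml.negation, Sat]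
  | top => intro w; simp [Fml.negation, Sat]
  | bot => intro w; simp [Fml.negation, Sat]
  | and A B ihA ihB => intro w; simp only [Fml.negation, Sat, ihA, ihB]; tauto
  | or A B ihA ihB => intro w; simp only [Fml.negation, Sat, ihA, ihB]; tauto
  | box A ih =>
    intro w
    simp only [Fml.negation, Sat]
    constructor
    · rintro ⟨v, hv, hs⟩ hall; exact (ih v).1 hs (hall v hv)
    · intro h
      by_contra hc
      push_neg at hc
      exact h (fun v hv => by
        by_contra hs
        exact (hc v hv) ((ih v).2 hs))
  | dia A ih =>
    intro w
    simp only [Fml.negation, Sat]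
    push_neg
    constructor
    · intro h v hv hs; exact (ih v).1 (h v hv) hs
    · intro h v hv; exact (ih v).2 (h v hv)

theorem Sat_imp {M : KM} {w : M.W} {A B : Fml} :
    Sat M w (A.imp B) ↔ (Sat M w A → Sat M w B) := by
  simp only [Fml.imp, Sat, Sat_negation]
  tauto

/-! #### Soundness of GLH -/

theorem eval_Sat (M : KM) (w : M.W) (A : Fml) :
    A.eval (fun n => decide (M.V w n)) (fun B => decide (Sat M w (.box B))) = true ↔
      Sat M w A := by
  induction A with
  | pos n => simp [Fml.eval, Sat]
  | neg n => simp [Fml.eval, Sat]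
  | top => simp [Fml.eval, Sat]
  | bot => simp [Fml.eval, Sat]
  | and A B ihA ihB => simp only [Fml.eval, Bool.and_eq_true, ihA, ihB]; exact Iff.rfl
  | or A B ihA ihB => simp only [Fml.eval, Bool.or_eq_true, ihA, ihB]; exact Iff.rfl
  | box A ih => simp only [Fml.eval]; exact decide_eq_true_iff
  | dia A ih =>
    simp only [Fml.eval, Bool.not_eq_true', decide_eq_false_iff_not]
    have : Sat M w (Fml.box A.negation) ↔ ¬ Sat M w (Fml.dia A) := by
      simp only [Sat, Sat_negation]
      push_neg
      rfl
    rw [this]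
    tauto

theorem sound {A : Fml} (h : GLH A) : ∀ (M : KM) (w : M.W), Sat M w A := by
  induction h with
  | taut A hA => intro M w; exact (eval_Sat M w A).1 (hA _ _)
  | distr A B =>
    intro M w
    rw [Sat_imp]
    intro h1
    rw [Sat_imp]
    intro h2
    intro v hv
    exact Sat_imp.1 (h1 v hv) (h2 v hv)
  | lob A =>
    intro M w
    rw [Sat_imp]
    intro h1
    have key : ∀ v, M.R w v → Sat M v A := by
      intro v
      induction v using WellFounded.induction M.wf with
      | _ v ih =>
      intro hwv
      have h2 : Sat M v ((Fml.box A).imp A) := h1 v hwv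
      apply Sat_imp.1 h2
      intro u hvu
      exact ih u hvu (M.trans hwv hvu)
    exact key
  | mp A B h1 h2 ih1 ih2 => exact fun M w => Sat_imp.1 (ih1 M w) (ih2 M w)
  | nec A h ih => intro M w v _; exact ih M v

theorem Sat_listSharp (M : KM) (w : M.W) :
    ∀ l : List Fml, Sat M w (listSharp l) ↔ ∃ A ∈ l, Sat M w A := by
  intro l
  induction l with
  | nil => simp [listSharp, Sat]
  | cons A l ih =>
    cases l with
    | nil => simp [listSharp]
    | cons B m =>
      show Sat M w (.or A (listSharp (B :: m))) ↔ _
      simp only [Sat, ih, List.mem_cons]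
      constructor
      · rintro (h | ⟨C, hC, hS⟩)
        · exact ⟨A, Or.inl rfl, h⟩
        · exact ⟨C, Or.inr hC, hS⟩
      · rintro ⟨C, (rfl | hC), hS⟩
        · exact Or.inl hS
        · exact Or.inr ⟨C, hC, hS⟩

theorem Sat_sharp {M : KM} {w : M.W} {Γ : Sequent} :
    Sat M w (sharp Γ) ↔ ∃ A ∈ Γ, Sat M w A := by
  rw [sharp, Sat_listSharp]
  simp

/-! #### Combining models -/

section Combine

variable {I : Type} (Ms : I → KM) (rt : ∀ i, (Ms i).W)

inductive combR : Option (Σ i, (Ms i).W) → Option (Σ i, (Ms i).W) → Prop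
  | root (i w) : (w = rt i ∨ (Ms i).R (rt i) w) → combR none (some ⟨i, w⟩)
  | sub {i : I} {w v : (Ms i).W} : (Ms i).R w v → combR (some ⟨i, w⟩) (some ⟨i, v⟩)

theorem combR_some {x : Σ i, (Ms i).W} {y : Option (Σ i, (Ms i).W)}
    (h : combR Ms rt (some x) y) :
    ∃ v : (Ms x.1).W, y = some ⟨x.1, v⟩ ∧ (Ms x.1).R x.2 v := by
  cases h with
  | sub h => exact ⟨_, rfl, h⟩

theorem combR_trans {a b c} (hab : combR Ms rt a b) (hbc : combR Ms rt b c) :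
    combR Ms rt a c := by
  cases hab with
  | root i w hw =>
    cases hbc with
    | sub h2 =>
      rcases hw with rfl | hw
      · exact combR.root _ _ (Or.inr h2)
      · exact combR.root _ _ (Or.inr ((Ms _).trans hw h2))
  | sub h1 =>
    cases hbc with
    | sub h2 => exact combR.sub ((Ms _).trans h1 h2)

theorem acc_some (i : I) :
    ∀ w : (Ms i).W, Acc (fun a b => (Ms i).R b a) w →
      Acc (fun a b => combR Ms rt b a) (some ⟨i, w⟩) := by
  intro w h
  induction h with
  | intro w _ ih =>
    constructor
    intro y hy
    rcases combR_some Ms rt hy with ⟨v, rfl, hv⟩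
    exact ih v hv

theorem combR_wf : WellFounded (fun a b => combR Ms rt b a) := by
  constructor
  intro x
  cases x with
  | some p => exact acc_some Ms rt p.1 p.2 ((Ms p.1).wf.apply p.2)
  | none =>
    constructor
    intro y hy
    cases hy with
    | root i w hw => exact acc_some Ms rt i w ((Ms i).wf.apply w)

def combKM (V0 : ℕ → Prop) : KM where
  W := Option (Σ i, (Ms i).W)
  R := combR Ms rt
  V := fun x n => match x with
    | none => V0 n
    | some p => (Ms p.1).V p.2 n
  trans := fun h1 h2 => combR_trans Ms rt h1 h2
  wf := combR_wf Ms rt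

theorem Sat_comb (V0 : ℕ → Prop) (A : Fml) :
    ∀ (i : I) (w : (Ms i).W),
      Sat (combKM Ms rt V0) (some ⟨i, w⟩) A ↔ Sat (Ms i) w A := by
  induction A with
  | pos n => intro i w; simp [Sat, combKM]
  | neg n => intro i w; simp [Sat, combKM]
  | top => intro i w; simp [Sat]
  | bot => intro i w; simp [Sat]
  | and A B ihA ihB => intro i w; simp [Sat, ihA, ihB]
  | or A B ihA ihB => intro i w; simp [Sat, ihA, ihB]
  | box A ih =>
    intro i w
    show (∀ y, combR Ms rt (some ⟨i, w⟩) y → Sat (combKM Ms rt V0) y A) ↔ _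
    constructor
    · intro h v hv
      exact (ih i v).1 (h (some ⟨i, v⟩) (combR.sub hv))
    · intro h y hy
      rcases combR_some Ms rt hy with ⟨v, rfl, hv⟩
      exact (ih i v).2 (h v hv)
  | dia A ih =>
    intro i w
    show (∃ y, combR Ms rt (some ⟨i, w⟩) y ∧ Sat (combKM Ms rt V0) y A) ↔ _
    constructor
    · rintro ⟨y, hy, hS⟩
      rcases combR_some Ms rt hy with ⟨v, rfl, hv⟩
      exact ⟨v, hv, (ih i v).1 hS⟩
    · rintro ⟨v, hv, hS⟩
      exact ⟨some ⟨i, v⟩, combR.sub hv, (ih i v).2 hS⟩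

end Combine

/-! #### sequent helpers -/

theorem GLSeq_of_mem_pair {Γ : Sequent} {A : Fml} (h1 : A ∈ Γ) (h2 : A.negation ∈ Γ) :
    GLSeq Γ := by
  have h2' : A.negation ∈ Γ.erase A := (Multiset.mem_erase_of_ne (neg_ne A)).2 h2
  have hΓ : Γ = A ::ₘ A.negation ::ₘ ((Γ.erase A).erase A.negation) := by
    rw [Multiset.cons_erase h2', Multiset.cons_erase h1]
  rw [hΓ]
  exact GLSeq.axA _ _

/-! #### measure -/

def ediff (Cl : Finset Fml) (Γ : Sequent) : ℕ :=
  (Cl.filter (fun C => Fml.isDia C = true ∧ C ∉ Γ)).card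

theorem ediff_le {Cl : Finset Fml} {Γ Γ' : Sequent}
    (h : ∀ C : Fml, Fml.isDia C = true → C ∈ Γ → C ∈ Γ') :
    ediff Cl Γ' ≤ ediff Cl Γ := by
  apply Finset.card_le_card
  intro C hC
  simp only [Finset.mem_filter] at *
  exact ⟨hC.1, hC.2.1, fun hc => hC.2.2 (h C hC.2.1 hc)⟩

theorem ediff_lt {Cl : Finset Fml} {Γ Γ' : Sequent}
    (h : ∀ C : Fml, Fml.isDia C = true → C ∈ Γ → C ∈ Γ')
    (D : Fml) (hD1 : Fml.isDia D = true) (hD2 : D ∈ Cl) (hD3 : D ∉ Γ) (hD4 : D ∈ Γ') :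
    ediff Cl Γ' < ediff Cl Γ := by
  apply Finset.card_lt_card
  constructor
  · intro C hC
    simp only [Finset.mem_filter] at *
    exact ⟨hC.1, hC.2.1, fun hc => hC.2.2 (h C hC.2.1 hc)⟩
  · intro hsub
    have : D ∈ Cl.filter (fun C => Fml.isDia C = true ∧ C ∉ Γ') := by
      apply hsub
      simp only [Finset.mem_filter]
      exact ⟨hD2, hD1, hD3⟩
    simp only [Finset.mem_filter] at this
    exact this.2.2 hD4


/-! #### The key lemma: derivability or countermodel -/

/-- The premise of the GL box rule for `□A` with all diamonds of `Γ` kept. -/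
def Prem (Γ : Sequent) (A : Fml) : Sequent :=
  A ::ₘ Fml.dia A.negation ::ₘ
    (diasOf (Γ.erase (Fml.box A)) + diaS (diasOf (Γ.erase (Fml.box A))))

theorem self_mem_Prem (Γ : Sequent) (A : Fml) : A ∈ Prem Γ A :=
  Multiset.mem_cons_self _ _

theorem dianeg_mem_Prem (Γ : Sequent) (A : Fml) : Fml.dia A.negation ∈ Prem Γ A :=
  Multiset.mem_cons_of_mem (Multiset.mem_cons_self _ _)

theorem mem_Prem_of_dias {Γ : Sequent} {A B : Fml}
    (h : B ∈ diasOf (Γ.erase (Fml.box A))) : B ∈ Prem Γ A :=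
  Multiset.mem_cons_of_mem (Multiset.mem_cons_of_mem (Multiset.mem_add.2 (Or.inl h)))

theorem dia_mem_Prem_of_dias {Γ : Sequent} {A B : Fml}
    (h : B ∈ diasOf (Γ.erase (Fml.box A))) : Fml.dia B ∈ Prem Γ A := by
  refine Multiset.mem_cons_of_mem (Multiset.mem_cons_of_mem
    (Multiset.mem_add.2 (Or.inr ?_)))
  simp only [diaS, Multiset.mem_map]
  exact ⟨B, h, rfl⟩

theorem exists_dia_of_isDia {C : Fml} (h : Fml.isDia C = true) :
    ∃ B, C = Fml.dia B := by
  cases C <;> simp_all [Fml.isDia]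

set_option maxHeartbeats 2000000 in
theorem key (Cl : Finset Fml)
    (hCl1 : ∀ A B : Fml, Fml.and A B ∈ Cl → A ∈ Cl ∧ B ∈ Cl)
    (hCl2 : ∀ A B : Fml, Fml.or A B ∈ Cl → A ∈ Cl ∧ B ∈ Cl)
    (hCl3 : ∀ A : Fml, Fml.box A ∈ Cl → A ∈ Cl ∧ Fml.dia A.negation ∈ Cl)
    (hCl4 : ∀ A : Fml, Fml.dia A ∈ Cl → A ∈ Cl) :
    ∀ (N : ℕ) (Γ : Sequent), msize Γ * 4 ^ ediff Cl Γ ≤ N → (∀ A ∈ Γ, A ∈ Cl) →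
      GLSeq Γ ∨ ∃ (M : KM) (w : M.W), ∀ A ∈ Γ, ¬ Sat M w A := by
  intro N
  induction N using Nat.strong_induction_on with
  | _ N IH =>
  intro Γ hN hCl
  by_cases htop : Fml.top ∈ Γ
  · left; rw [← Multiset.cons_erase htop]; exact GLSeq.axTop _
  by_cases hpair : ∃ A : Fml, A ∈ Γ ∧ A.negation ∈ Γ
  · obtain ⟨A, h1, h2⟩ := hpair; left; exact GLSeq_of_mem_pair h1 h2
  by_cases hand : ∃ A B : Fml, Fml.and A B ∈ Γ
  · obtain ⟨A, B, hm⟩ := hand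
    have hΓ : Γ = Fml.and A B ::ₘ Γ.erase (Fml.and A B) := (Multiset.cons_erase hm).symm
    have hsubΔ : ∀ C ∈ Γ.erase (Fml.and A B), C ∈ Cl :=
      fun C hC => hCl C (Multiset.mem_of_mem_erase hC)
    have hdias : ∀ X : Fml, ∀ C : Fml, Fml.isDia C = true → C ∈ Γ →
        C ∈ X ::ₘ Γ.erase (Fml.and A B) := by
      intro X C hCd hCΓ
      apply Multiset.mem_cons_of_mem
      apply (Multiset.mem_erase_of_ne ?_).2 hCΓ
      rintro rfl; simp [Fml.isDia] at hCd
    have hmes : ∀ X : Fml, fsize X < fsize (Fml.and A B) →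
        msize (X ::ₘ Γ.erase (Fml.and A B)) *
          4 ^ ediff Cl (X ::ₘ Γ.erase (Fml.and A B)) < N := by
      intro X hX
      have hp : 0 < 4 ^ ediff Cl Γ := Nat.pow_pos (by norm_num)
      have h1 : msize (X ::ₘ Γ.erase (Fml.and A B)) < msize Γ := by
        conv_rhs => rw [hΓ]
        simp only [msize_cons]
        omega
      calc msize (X ::ₘ Γ.erase (Fml.and A B)) *
            4 ^ ediff Cl (X ::ₘ Γ.erase (Fml.and A B))
          ≤ msize (X ::ₘ Γ.erase (Fml.and A B)) * 4 ^ ediff Cl Γ :=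
            Nat.mul_le_mul_left _ (Nat.pow_le_pow_right (by norm_num) (ediff_le (hdias X)))
        _ < msize Γ * 4 ^ ediff Cl Γ := mul_lt_mul_of_pos_right h1 hp
        _ ≤ N := hN
    have hClX : ∀ X : Fml, X ∈ Cl → ∀ C ∈ X ::ₘ Γ.erase (Fml.and A B), C ∈ Cl := by
      intro X hX C hC
      rcases Multiset.mem_cons.1 hC with rfl | h
      · exact hX
      · exact hsubΔ C h
    have hACl : A ∈ Cl ∧ B ∈ Cl := hCl1 A B (hCl _ hm)
    rcases IH _ (hmes A (by simp only [fsize]; omega)) _ le_rfl (hClX A hACl.1) with dA | ⟨M, w, hM⟩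
    · rcases IH _ (hmes B (by simp only [fsize]; omega)) _ le_rfl (hClX B hACl.2) with dB | ⟨M, w, hM⟩
      · left; rw [hΓ]; exact GLSeq.andR dA dB
      · right
        refine ⟨M, w, ?_⟩
        intro C hC
        rw [hΓ] at hC
        rcases Multiset.mem_cons.1 hC with rfl | h
        · intro hS
          exact hM B (Multiset.mem_cons_self _ _)
            (show Sat M w A ∧ Sat M w B from hS).2
        · exact hM C (Multiset.mem_cons_of_mem h)
    · right
      refine ⟨M, w, ?_⟩
      intro C hC
      rw [hΓ] at hC
      rcases Multiset.mem_cons.1 hC with rfl | h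
      · intro hS
        exact hM A (Multiset.mem_cons_self _ _)
          (show Sat M w A ∧ Sat M w B from hS).1
      · exact hM C (Multiset.mem_cons_of_mem h)
  by_cases hor : ∃ A B : Fml, Fml.or A B ∈ Γ
  · obtain ⟨A, B, hm⟩ := hor
    have hΓ : Γ = Fml.or A B ::ₘ Γ.erase (Fml.or A B) := (Multiset.cons_erase hm).symm
    have hsubΔ : ∀ C ∈ Γ.erase (Fml.or A B), C ∈ Cl :=
      fun C hC => hCl C (Multiset.mem_of_mem_erase hC)
    have hdias : ∀ C : Fml, Fml.isDia C = true → C ∈ Γ →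
        C ∈ A ::ₘ B ::ₘ Γ.erase (Fml.or A B) := by
      intro C hCd hCΓ
      apply Multiset.mem_cons_of_mem
      apply Multiset.mem_cons_of_mem
      apply (Multiset.mem_erase_of_ne ?_).2 hCΓ
      rintro rfl; simp [Fml.isDia] at hCd
    have hACl : A ∈ Cl ∧ B ∈ Cl := hCl2 A B (hCl _ hm)
    have hmes : msize (A ::ₘ B ::ₘ Γ.erase (Fml.or A B)) *
        4 ^ ediff Cl (A ::ₘ B ::ₘ Γ.erase (Fml.or A B)) < N := by
      have hp : 0 < 4 ^ ediff Cl Γ := Nat.pow_pos (by norm_num)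
      have h1 : msize (A ::ₘ B ::ₘ Γ.erase (Fml.or A B)) < msize Γ := by
        conv_rhs => rw [hΓ]
        simp only [msize_cons, fsize]
        omega
      calc msize (A ::ₘ B ::ₘ Γ.erase (Fml.or A B)) *
            4 ^ ediff Cl (A ::ₘ B ::ₘ Γ.erase (Fml.or A B))
          ≤ msize (A ::ₘ B ::ₘ Γ.erase (Fml.or A B)) * 4 ^ ediff Cl Γ :=
            Nat.mul_le_mul_left _ (Nat.pow_le_pow_right (by norm_num) (ediff_le hdias))
        _ < msize Γ * 4 ^ ediff Cl Γ := mul_lt_mul_of_pos_right h1 hp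
        _ ≤ N := hN
    have hClQ : ∀ C ∈ A ::ₘ B ::ₘ Γ.erase (Fml.or A B), C ∈ Cl := by
      intro C hC
      rcases Multiset.mem_cons.1 hC with rfl | hC
      · exact hACl.1
      rcases Multiset.mem_cons.1 hC with rfl | hC
      · exact hACl.2
      exact hsubΔ C hC
    rcases IH _ hmes _ le_rfl hClQ with dQ | ⟨M, w, hM⟩
    · left; rw [hΓ]; exact GLSeq.orR dQ
    · right
      refine ⟨M, w, ?_⟩
      intro C hC
      rw [hΓ] at hC
      rcases Multiset.mem_cons.1 hC with rfl | h
      · intro hS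
        rcases (show Sat M w A ∨ Sat M w B from hS) with h | h
        · exact hM A (Multiset.mem_cons_self _ _) h
        · exact hM B (Multiset.mem_cons_of_mem (Multiset.mem_cons_self _ _)) h
      · exact hM C (Multiset.mem_cons_of_mem (Multiset.mem_cons_of_mem h))
  -- saturated case
  by_cases hbox : ∃ A : Fml, Fml.box A ∈ Γ ∧ GLSeq (Prem Γ A)
  · obtain ⟨A, hm, hd⟩ := hbox
    left
    have hΓ : Γ = Fml.box A ::ₘ
        (diaS (diasOf (Γ.erase (Fml.box A))) + nondias (Γ.erase (Fml.box A))) := by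
      rw [decomp]
      exact (Multiset.cons_erase hm).symm
    rw [hΓ]
    exact GLSeq.boxGL hd
  · right
    push_neg at hbox
    have hrec : ∀ i : {A : Fml // Fml.box A ∈ Γ},
        ∃ (M : KM) (w : M.W), ∀ C ∈ Prem Γ i.1, ¬ Sat M w C := by
      rintro ⟨A, hm⟩
      have hboxCl : Fml.box A ∈ Cl := hCl _ hm
      have hACl := (hCl3 A hboxCl).1
      have hdACl := (hCl3 A hboxCl).2
      have hAn : Fml.dia A.negation ∉ Γ := by
        intro hcon
        apply hbox A hm
        have h1 : Fml.dia A.negation ∈ Γ.erase (Fml.box A) :=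
          (Multiset.mem_erase_of_ne (by simp)).2 hcon
        have h2 : A.negation ∈ diasOf (Γ.erase (Fml.box A)) := mem_diasOf.2 h1
        exact GLSeq_of_mem_pair (self_mem_Prem Γ A) (mem_Prem_of_dias h2)
      have hdias : ∀ C : Fml, Fml.isDia C = true → C ∈ Γ → C ∈ Prem Γ A := by
        intro C hCd hCΓ
        obtain ⟨B, rfl⟩ := exists_dia_of_isDia hCd
        have h1 : Fml.dia B ∈ Γ.erase (Fml.box A) :=
          (Multiset.mem_erase_of_ne (by simp)).2 hCΓ
        exact dia_mem_Prem_of_dias (mem_diasOf.2 h1)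
      have hPCl : ∀ C ∈ Prem Γ A, C ∈ Cl := by
        intro C hC
        simp only [Prem] at hC
        rcases Multiset.mem_cons.1 hC with rfl | hC
        · exact hACl
        rcases Multiset.mem_cons.1 hC with rfl | hC
        · exact hdACl
        rcases Multiset.mem_add.1 hC with hC | hC
        · exact hCl4 C (hCl _ (Multiset.mem_of_mem_erase (mem_diasOf.1 hC)))
        · obtain ⟨B, hB, rfl⟩ := Multiset.mem_map.1 hC
          exact hCl _ (Multiset.mem_of_mem_erase (mem_diasOf.1 hB))
      have hlt : ediff Cl (Prem Γ A) < ediff Cl Γ :=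
        ediff_lt hdias (Fml.dia A.negation) (by simp [Fml.isDia]) hdACl hAn
          (dianeg_mem_Prem Γ A)
      have hms : msize (Prem Γ A) ≤ 2 * msize Γ := by
        have h1 : msize Γ = fsize (Fml.box A) +
            (msize (diaS (diasOf (Γ.erase (Fml.box A)))) +
              msize (nondias (Γ.erase (Fml.box A)))) := by
          conv_lhs => rw [← Multiset.cons_erase hm]
          rw [msize_cons]
          congr 1
          conv_lhs => rw [← decomp (Γ.erase (Fml.box A))]
          rw [msize_add]
        have h2 : msize (Prem Γ A) = fsize A + ((fsize A + 1) +
            (msize (diasOf (Γ.erase (Fml.box A))) +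
              msize (diaS (diasOf (Γ.erase (Fml.box A)))))) := by
          simp only [Prem, msize_cons, msize_add, fsize, fsize_negation]
        have h3 := msize_diaS (diasOf (Γ.erase (Fml.box A)))
        have h4 : fsize (Fml.box A) = fsize A + 1 := by simp [fsize]
        omega
      have hμ : msize (Prem Γ A) * 4 ^ ediff Cl (Prem Γ A) < N := by
        have hp : 0 < 4 ^ ediff Cl (Prem Γ A) := Nat.pow_pos (by norm_num)
        have hΓpos : 0 < msize Γ := msize_pos_of_mem hm
        calc msize (Prem Γ A) * 4 ^ ediff Cl (Prem Γ A)
            ≤ 2 * msize Γ * 4 ^ ediff Cl (Prem Γ A) := Nat.mul_le_mul_right _ hms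
          _ < 4 * msize Γ * 4 ^ ediff Cl (Prem Γ A) := by
              apply mul_lt_mul_of_pos_right _ hp
              omega
          _ = msize Γ * 4 ^ (ediff Cl (Prem Γ A) + 1) := by ring
          _ ≤ msize Γ * 4 ^ ediff Cl Γ :=
              Nat.mul_le_mul_left _ (Nat.pow_le_pow_right (by norm_num) (by omega))
          _ ≤ N := hN
      rcases IH _ hμ (Prem Γ A) le_rfl hPCl with hd | hcm
      · exact absurd hd (hbox A hm)
      · exact hcm
    choose Ms ws hws using hrec
    refine ⟨combKM Ms ws (fun n => Fml.neg n ∈ Γ), none, ?_⟩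
    intro C hC
    have hpair' : ∀ A : Fml, A ∈ Γ → A.negation ∉ Γ := by
      intro A hA hA'; exact hpair ⟨A, hA, hA'⟩
    cases C with
    | pos n => exact fun hc => hpair' _ hC hc
    | neg n => exact fun hc => hc hC
    | top => exact absurd hC htop
    | bot => exact fun hS => hS
    | and A B => exact absurd ⟨A, B, hC⟩ hand
    | or A B => exact absurd ⟨A, B, hC⟩ hor
    | box A =>
      intro hS
      have hR : combR Ms ws none (some ⟨⟨A, hC⟩, ws ⟨A, hC⟩⟩) :=
        combR.root _ _ (Or.inl rfl)
      have hSA := hS _ hR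
      rw [Sat_comb] at hSA
      exact hws ⟨A, hC⟩ A (self_mem_Prem Γ A) hSA
    | dia B =>
      rintro ⟨y, hR, hS⟩
      cases hR with
      | root i w hw =>
        have h1 : Fml.dia B ∈ Γ.erase (Fml.box i.1) :=
          (Multiset.mem_erase_of_ne (by simp)).2 hC
        have h2 : B ∈ diasOf (Γ.erase (Fml.box i.1)) := mem_diasOf.2 h1
        have hB1 : B ∈ Prem Γ i.1 := mem_Prem_of_dias h2
        have hB2 : Fml.dia B ∈ Prem Γ i.1 := dia_mem_Prem_of_dias h2
        rw [Sat_comb] at hS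
        rcases hw with rfl | hw
        · exact hws i B hB1 hS
        · exact hws i (Fml.dia B) hB2 ⟨w, hw, hS⟩

end GLCompletenessAux


theorem GLSeq_complete (Γ : Sequent) (h : GLH (sharp Γ)) : GLSeq Γ := by
  classical
  open GLCompletenessAux in
  have main : GLSeq Γ ∨ ∃ (M : GLCompletenessAux.KM) (w : M.W),
      ∀ A ∈ Γ, ¬ GLCompletenessAux.Sat M w A := by
    set Cl : Finset Fml := Γ.toFinset.sup (fun A => GLCompletenessAux.subf A ∪
      GLCompletenessAux.subf A.negation) with hCldef
    have memCl : ∀ {C : Fml}, C ∈ Cl ↔ ∃ A ∈ Γ.toFinset,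
        C ∈ GLCompletenessAux.subf A ∪ GLCompletenessAux.subf A.negation := by
      intro C; rw [hCldef]; exact Finset.mem_sup
    have hsub1 : ∀ {C C' : Fml}, C ∈ Cl → C' ∈ GLCompletenessAux.subf C → C' ∈ Cl := by
      intro C C' hC hC'
      obtain ⟨A, hA, hm⟩ := memCl.1 hC
      rcases Finset.mem_union.1 hm with h' | h'
      · exact memCl.2 ⟨A, hA, Finset.mem_union_left _ (GLCompletenessAux.subf_trans h' hC')⟩
      · exact memCl.2 ⟨A, hA, Finset.mem_union_right _ (GLCompletenessAux.subf_trans h' hC')⟩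
    have hnegCl : ∀ {C : Fml}, C ∈ Cl → C.negation ∈ Cl := by
      intro C hC
      obtain ⟨A, hA, hm⟩ := memCl.1 hC
      rcases Finset.mem_union.1 hm with h' | h'
      · exact memCl.2 ⟨A, hA, Finset.mem_union_right _ (GLCompletenessAux.subf_negation h')⟩
      · have h2 := GLCompletenessAux.subf_negation h'
        rw [GLCompletenessAux.neg_neg'] at h2
        exact memCl.2 ⟨A, hA, Finset.mem_union_left _ h2⟩
    have hCl1 : ∀ A B : Fml, Fml.and A B ∈ Cl → A ∈ Cl ∧ B ∈ Cl := by
      intro A B hm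
      constructor
      · exact hsub1 hm (by simp [GLCompletenessAux.subf, GLCompletenessAux.mem_subf_self])
      · exact hsub1 hm (by simp [GLCompletenessAux.subf, GLCompletenessAux.mem_subf_self])
    have hCl2 : ∀ A B : Fml, Fml.or A B ∈ Cl → A ∈ Cl ∧ B ∈ Cl := by
      intro A B hm
      constructor
      · exact hsub1 hm (by simp [GLCompletenessAux.subf, GLCompletenessAux.mem_subf_self])
      · exact hsub1 hm (by simp [GLCompletenessAux.subf, GLCompletenessAux.mem_subf_self])
    have hCl3 : ∀ A : Fml, Fml.box A ∈ Cl → A ∈ Cl ∧ Fml.dia A.negation ∈ Cl := by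
      intro A hm
      constructor
      · exact hsub1 hm (by simp [GLCompletenessAux.subf, GLCompletenessAux.mem_subf_self])
      · exact hnegCl hm
    have hCl4 : ∀ A : Fml, Fml.dia A ∈ Cl → A ∈ Cl := by
      intro A hm
      exact hsub1 hm (by simp [GLCompletenessAux.subf, GLCompletenessAux.mem_subf_self])
    have hIn : ∀ A ∈ Γ, A ∈ Cl := fun A hA =>
      memCl.2 ⟨A, Multiset.mem_toFinset.2 hA,
        Finset.mem_union_left _ (GLCompletenessAux.mem_subf_self A)⟩
    exact GLCompletenessAux.key Cl hCl1 hCl2 hCl3 hCl4 _ Γ le_rfl hIn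
  rcases main with hd | ⟨M, w, hM⟩
  · exact hd
  · exfalso
    obtain ⟨A, hA, hS⟩ := GLCompletenessAux.Sat_sharp.1 (GLCompletenessAux.sound h M w)
    exact hM A hA hS
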